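/- (Proposition 1: Moutard type transformation for the system with B = 0.) Let D ⊆ ℂ be open, let A, Ψ, F, F⁺, ω̂_{F,F⁺}, ω̂_{Ψ,F⁺} : D → Matrix (Fin N) (Fin N) ℂ be real-differentiable, and assume on D: (i) ∂_z̄ Ψ + A·Ψ = 0 and ∂_z̄ F + A·F = 0; (ii) ∂_z̄ ω̂_{F,F⁺} = F⁺·F and ∂_z̄ ω̂_{Ψ,F⁺} = F⁺·Ψ; (iii) ω̂_{F,F⁺}(z) is invertible for every z ∈ D. Define Ψ̃ = Ψ − F · ω̂_{F,F⁺}⁻¹ · ω̂_{Ψ,F⁺} and Ã = A + F · ω̂_{F,F⁺}⁻¹ · F⁺. Then ∂_z̄ Ψ̃ + Ã·Ψ̃ = 0 on D. -/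

import Mathlib

open Complex Matrix

/-- Entrywise Wirtinger derivative ∂_z f = (1/2)(∂f/∂x − i ∂f/∂y). -/
noncomputable def wDz {N : ℕ} (f : ℂ → Matrix (Fin N) (Fin N) ℂ) (z : ℂ) :
    Matrix (Fin N) (Fin N) ℂ :=
  Matrix.of fun i j =>
    (1 / 2 : ℂ) * (fderiv ℝ (fun w => f w i j) z 1
      - Complex.I * fderiv ℝ (fun w => f w i j) z Complex.I)

/-- Entrywise Wirtinger derivative ∂_z̄ f = (1/2)(∂f/∂x + i ∂f/∂y). -/
noncomputable def wDzbar {N : ℕ} (f : ℂ → Matrix (Fin N) (Fin N) ℂ) (z : ℂ) :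
    Matrix (Fin N) (Fin N) ℂ :=
  Matrix.of fun i j =>
    (1 / 2 : ℂ) * (fderiv ℝ (fun w => f w i j) z 1
      + Complex.I * fderiv ℝ (fun w => f w i j) z Complex.I)

/-- Real-differentiability, entrywise, at every point of `D`. -/
def MatDiffOn {N : ℕ} (f : ℂ → Matrix (Fin N) (Fin N) ℂ) (D : Set ℂ) : Prop :=
  ∀ z ∈ D, ∀ i j, DifferentiableAt ℝ (fun w => f w i j) z

/-- Entrywise complex conjugate of a matrix. -/
def mconj {N : ℕ} (M : Matrix (Fin N) (Fin N) ℂ) : Matrix (Fin N) (Fin N) ℂ :=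
  M.map (starRingEnd ℂ)

/-- Scalar Wirtinger ∂_z̄ derivative. -/
noncomputable def wdz1 (f : ℂ → ℂ) (z : ℂ) : ℂ :=
  (1 / 2 : ℂ) * (fderiv ℝ f z 1 + Complex.I * fderiv ℝ f z Complex.I)

lemma wdz1_mul {f g : ℂ → ℂ} {z : ℂ} (hf : DifferentiableAt ℝ f z)
    (hg : DifferentiableAt ℝ g z) :
    wdz1 (fun w => f w * g w) z = wdz1 f z * g z + f z * wdz1 g z := by
  unfold wdz1
  rw [fderiv_fun_mul hf hg]
  simp only [ContinuousLinearMap.add_apply, ContinuousLinearMap.smul_apply, smul_eq_mul]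
  ring

lemma wdz1_sum {ι : Type*} (s : Finset ι) {f : ι → ℂ → ℂ} {z : ℂ}
    (hf : ∀ i ∈ s, DifferentiableAt ℝ (f i) z) :
    wdz1 (fun w => ∑ i ∈ s, f i w) z = ∑ i ∈ s, wdz1 (f i) z := by
  unfold wdz1
  rw [fderiv_fun_sum hf]
  simp only [ContinuousLinearMap.sum_apply]
  rw [Finset.mul_sum] at *
  rw [← Finset.sum_add_distrib, Finset.mul_sum]

lemma wdz1_congr {f g : ℂ → ℂ} {z : ℂ} (h : f =ᶠ[nhds z] g) :
    wdz1 f z = wdz1 g z := by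
  unfold wdz1; rw [h.fderiv_eq]

lemma wdz1_const (c : ℂ) (z : ℂ) : wdz1 (fun _ => c) z = 0 := by
  simp [wdz1]

lemma wdz1_sub {f g : ℂ → ℂ} {z : ℂ} (hf : DifferentiableAt ℝ f z)
    (hg : DifferentiableAt ℝ g z) :
    wdz1 (fun w => f w - g w) z = wdz1 f z - wdz1 g z := by
  unfold wdz1
  rw [fderiv_fun_sub hf hg]
  simp only [ContinuousLinearMap.sub_apply]
  ring

lemma diffAt_prod {ι : Type*} {z : ℂ} (s : Finset ι) {f : ι → ℂ → ℂ}
    (h : ∀ i ∈ s, DifferentiableAt ℝ (f i) z) :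
    DifferentiableAt ℝ (fun w => ∏ i ∈ s, f i w) z := by
  classical
  induction s using Finset.induction_on with
  | empty => simp
  | insert _ _ hx ih =>
    rename_i a s
    simp only [Finset.prod_insert hx]
    exact (h a (Finset.mem_insert_self a s)).fun_mul
      (ih fun i hi => h i (Finset.mem_insert_of_mem hi))

lemma diffAt_det {N : ℕ} {f : ℂ → Matrix (Fin N) (Fin N) ℂ} {z : ℂ}
    (hf : ∀ i j, DifferentiableAt ℝ (fun w => f w i j) z) :
    DifferentiableAt ℝ (fun w => (f w).det) z := by
  simp only [Matrix.det_apply, Units.smul_def, zsmul_eq_mul]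
  apply DifferentiableAt.fun_sum
  intro σ _
  apply DifferentiableAt.const_mul
  apply diffAt_prod
  intro i _
  exact hf (σ i) i

lemma diffAt_inv {N : ℕ} {f : ℂ → Matrix (Fin N) (Fin N) ℂ} {z : ℂ}
    (hf : ∀ i j, DifferentiableAt ℝ (fun w => f w i j) z)
    (hz : IsUnit (f z)) (i j : Fin N) :
    DifferentiableAt ℝ (fun w => (f w)⁻¹ i j) z := by
  have hdet : (f z).det ≠ 0 := ((Matrix.isUnit_iff_isUnit_det _).mp hz).ne_zero
  have hadj : DifferentiableAt ℝ (fun w => (f w).adjugate i j) z := by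
    simp only [Matrix.adjugate_apply]
    apply diffAt_det
    intro k l
    simp only [Matrix.updateRow_apply]
    by_cases h : k = j <;> simp [h]
    exact hf k l
  have heq : (fun w => (f w)⁻¹ i j) = fun w => ((f w).det)⁻¹ * (f w).adjugate i j := by
    funext w
    rw [Matrix.inv_def, Matrix.smul_apply, Ring.inverse_eq_inv', smul_eq_mul]
  rw [heq]
  exact ((diffAt_det hf).inv hdet).mul hadj

lemma wDzbar_apply {N : ℕ} (f : ℂ → Matrix (Fin N) (Fin N) ℂ) (z : ℂ) (i j : Fin N) :
    wDzbar f z i j = wdz1 (fun w => f w i j) z := rfl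

lemma matDiff_mul {N : ℕ} {f g : ℂ → Matrix (Fin N) (Fin N) ℂ} {z : ℂ}
    (hf : ∀ i j, DifferentiableAt ℝ (fun w => f w i j) z)
    (hg : ∀ i j, DifferentiableAt ℝ (fun w => g w i j) z) (i j : Fin N) :
    DifferentiableAt ℝ (fun w => (f w * g w) i j) z := by
  simp only [Matrix.mul_apply]
  exact DifferentiableAt.fun_sum fun k _ => (hf i k).fun_mul (hg k j)

lemma wDzbar_mul {N : ℕ} {f g : ℂ → Matrix (Fin N) (Fin N) ℂ} {z : ℂ}
    (hf : ∀ i j, DifferentiableAt ℝ (fun w => f w i j) z)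
    (hg : ∀ i j, DifferentiableAt ℝ (fun w => g w i j) z) :
    wDzbar (fun w => f w * g w) z = wDzbar f z * g z + f z * wDzbar g z := by
  ext i j
  rw [Matrix.add_apply, Matrix.mul_apply, Matrix.mul_apply, wDzbar_apply]
  have heq : (fun w => (f w * g w) i j) = fun w => ∑ k, f w i k * g w k j := by
    funext w; rw [Matrix.mul_apply]
  rw [heq, wdz1_sum Finset.univ fun k _ => (hf i k).fun_mul (hg k j)]
  rw [← Finset.sum_add_distrib]
  congr 1
  funext k
  rw [wdz1_mul (hf i k) (hg k j), wDzbar_apply, wDzbar_apply]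

lemma wDzbar_sub {N : ℕ} {f g : ℂ → Matrix (Fin N) (Fin N) ℂ} {z : ℂ}
    (hf : ∀ i j, DifferentiableAt ℝ (fun w => f w i j) z)
    (hg : ∀ i j, DifferentiableAt ℝ (fun w => g w i j) z) :
    wDzbar (fun w => f w - g w) z = wDzbar f z - wDzbar g z := by
  ext i j
  rw [Matrix.sub_apply, wDzbar_apply]
  have heq : (fun w => (f w - g w) i j) = fun w => f w i j - g w i j := by
    funext w; rw [Matrix.sub_apply]
  rw [heq, wdz1_sub (hf i j) (hg i j), wDzbar_apply, wDzbar_apply]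

lemma wDzbar_congr {N : ℕ} {f g : ℂ → Matrix (Fin N) (Fin N) ℂ} {z : ℂ}
    (h : f =ᶠ[nhds z] g) : wDzbar f z = wDzbar g z := by
  ext i j
  rw [wDzbar_apply, wDzbar_apply]
  exact wdz1_congr (h.mono fun w hw => congrFun (congrFun hw i) j)

lemma wDzbar_const {N : ℕ} (c : Matrix (Fin N) (Fin N) ℂ) (z : ℂ) :
    wDzbar (fun _ => c) z = 0 := by
  ext i j
  rw [wDzbar_apply]
  exact wdz1_const _ _

/-- Proposition 1: Moutard type transformation for the system with B = 0:
Ψ̃ = Ψ − F·ω̂_{F,F⁺}⁻¹·ω̂_{Ψ,F⁺} satisfies ∂_z̄ Ψ̃ + Ã·Ψ̃ = 0 with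
Ã = A + F·ω̂_{F,F⁺}⁻¹·F⁺. -/
theorem moutard_B_zero {N : ℕ} (D : Set ℂ) (hD : IsOpen D)
    (A Ψ F Fp ωFF ωΨF : ℂ → Matrix (Fin N) (Fin N) ℂ)
    (hA : MatDiffOn A D) (hΨ : MatDiffOn Ψ D) (hF : MatDiffOn F D)
    (hFp : MatDiffOn Fp D) (hωFF : MatDiffOn ωFF D) (hωΨF : MatDiffOn ωΨF D)
    (hΨsys : ∀ z ∈ D, wDzbar Ψ z + A z * Ψ z = 0)
    (hFsys : ∀ z ∈ D, wDzbar F z + A z * F z = 0)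
    (hωFFzbar : ∀ z ∈ D, wDzbar ωFF z = Fp z * F z)
    (hωΨFzbar : ∀ z ∈ D, wDzbar ωΨF z = Fp z * Ψ z)
    (hinv : ∀ z ∈ D, IsUnit (ωFF z)) :
    ∀ z ∈ D,
      wDzbar (fun w => Ψ w - F w * (ωFF w)⁻¹ * ωΨF w) z
        + (A z + F z * (ωFF z)⁻¹ * Fp z)
          * (Ψ z - F z * (ωFF z)⁻¹ * ωΨF z) = 0 := by
  intro z hz
  -- differentiability of the inverse entries
  have hG : ∀ i j, DifferentiableAt ℝ (fun w => (ωFF w)⁻¹ i j) z :=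
    diffAt_inv (hωFF z hz) (hinv z hz)
  have hFG : ∀ i j, DifferentiableAt ℝ (fun w => (F w * (ωFF w)⁻¹) i j) z :=
    matDiff_mul (hF z hz) hG
  have hFGω : ∀ i j,
      DifferentiableAt ℝ (fun w => (F w * (ωFF w)⁻¹ * ωΨF w) i j) z :=
    matDiff_mul hFG (hωΨF z hz)
  -- ωFF * ωFF⁻¹ = 1 on D
  have hdetu : ∀ w ∈ D, IsUnit (ωFF w).det := fun w hw =>
    (Matrix.isUnit_iff_isUnit_det _).mp (hinv w hw)
  have hmulinv : (fun w => ωFF w * (ωFF w)⁻¹) =ᶠ[nhds z]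
      (fun _ => (1 : Matrix (Fin N) (Fin N) ℂ)) := by
    filter_upwards [hD.mem_nhds hz] with w hw
    exact Matrix.mul_nonsing_inv _ (hdetu w hw)
  have hinvmul : (ωFF z)⁻¹ * ωFF z = 1 := Matrix.nonsing_inv_mul _ (hdetu z hz)
  -- derivative of the inverse
  have hGder : wDzbar (fun w => (ωFF w)⁻¹) z
      = -((ωFF z)⁻¹ * (Fp z * F z) * (ωFF z)⁻¹) := by
    have h1 : wDzbar (fun w => ωFF w * (ωFF w)⁻¹) z = 0 := by
      rw [wDzbar_congr hmulinv, wDzbar_const]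
    rw [wDzbar_mul (hωFF z hz) hG, hωFFzbar z hz] at h1
    have h2 : (ωFF z)⁻¹ * (Fp z * F z * (ωFF z)⁻¹ + ωFF z * wDzbar (fun w => (ωFF w)⁻¹) z)
        = (ωFF z)⁻¹ * 0 := by rw [h1]
    rw [mul_add, ← mul_assoc (ωFF z)⁻¹ (ωFF z), hinvmul, one_mul, mul_zero] at h2
    have h3 := eq_neg_of_add_eq_zero_right h2
    rw [h3]
    noncomm_ring
  -- derivatives of the pieces
  have hΨder : wDzbar Ψ z = -(A z * Ψ z) := eq_neg_of_add_eq_zero_left (hΨsys z hz)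
  have hFder : wDzbar F z = -(A z * F z) := eq_neg_of_add_eq_zero_left (hFsys z hz)
  rw [wDzbar_sub (hΨ z hz) hFGω,
    wDzbar_mul hFG (hωΨF z hz),
    wDzbar_mul (hF z hz) hG,
    hGder, hΨder, hFder, hωΨFzbar z hz]
  noncomm_ring
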